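/- Let X ∈ GL_2(ℤ) be an invertible 2 × 2 integer matrix with distinct complex eigenvalues λ_1 ≠ λ_2, and set a = tr X and b = (tr X)² − 4 det X. Then b ≠ 0, (λ_1 − λ_2)² = b, and for every n ≥ 1 the complex number D_n = (n²/b) · (det X)^{n−1} · (λ_1^n − λ_2^n)² is an integer; moreover, denoting these integers by d_n, n | m implies d_n | d_m. -/

import Mathlib

open Polynomial Finset Matrix

/-- Lucas U sequence with parameters `p` (sum) and `q` (product). -/
def lucasU (p q : ℤ) : ℕ → ℤ
  | 0 => 0
  | 1 => 1
  | (n+2) => p * lucasU p q (n+1) - q * lucasU p q n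

/-- Lucas V sequence. -/
def lucasV (p q : ℤ) : ℕ → ℤ
  | 0 => 2
  | 1 => p
  | (n+2) => p * lucasV p q (n+1) - q * lucasV p q n

lemma lucasU_closed (p q : ℤ) (α β : ℂ) (hs : α + β = (p:ℂ)) (hp : α * β = (q:ℂ))
    (hne : α ≠ β) : ∀ n, (lucasU p q n : ℂ) = (α ^ n - β ^ n) / (α - β) := by
  have hd : α - β ≠ 0 := sub_ne_zero.mpr hne
  intro n
  induction n using Nat.strong_induction_on with
  | _ n ih =>
    match n with
    | 0 => simp [lucasU]
    | 1 => simp [lucasU, div_self hd]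
    | (n+2) =>
      have h1 := ih (n+1) (by omega)
      have h0 := ih n (by omega)
      simp only [lucasU, Int.cast_sub, Int.cast_mul, h1, h0]
      rw [← hs, ← hp]
      field_simp
      ring

lemma lucasV_closed (p q : ℤ) (α β : ℂ) (hs : α + β = (p:ℂ)) (hp : α * β = (q:ℂ)) :
    ∀ n, (lucasV p q n : ℂ) = α ^ n + β ^ n := by
  intro n
  induction n using Nat.strong_induction_on with
  | _ n ih =>
    match n with
    | 0 => norm_num [lucasV]
    | 1 => simpa [lucasV] using hs.symm
    | (n+2) =>
      have h1 := ih (n+1) (by omega)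
      have h0 := ih n (by omega)
      simp only [lucasV, Int.cast_sub, Int.cast_mul, h1, h0]
      rw [← hs, ← hp]
      ring

lemma lucasU_dvd (p q : ℤ) (α β : ℂ) (hs : α + β = (p:ℂ)) (hp : α * β = (q:ℂ))
    (hne : α ≠ β) (n : ℕ) : ∀ k, lucasU p q n ∣ lucasU p q (n * k) := by
  have hd : α - β ≠ 0 := sub_ne_zero.mpr hne
  intro k
  induction k using Nat.strong_induction_on with
  | _ k ih =>
    match k with
    | 0 => simp [lucasU]
    | 1 => simp
    | (k+2) =>
      have key : lucasU p q (n*(k+2)) =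
          lucasU p q (n*(k+1)) * lucasV p q n - q ^ n * lucasU p q (n*k) := by
        have := Int.cast_injective (α := ℂ)
        apply this
        push_cast
        rw [lucasU_closed p q α β hs hp hne, lucasU_closed p q α β hs hp hne,
          lucasU_closed p q α β hs hp hne, lucasV_closed p q α β hs hp, ← hp]
        field_simp
        simp only [pow_mul, mul_pow]
        ring
      rw [key]
      exact dvd_sub (Dvd.dvd.mul_right (ih (k+1) (by omega)) _)
        (Dvd.dvd.mul_left (ih k (by omega)) _)

/-- For `X ∈ GL_2(ℤ)` with distinct eigenvalues `λ_1 ≠ λ_2`,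
setting `a = tr X` and `b = (tr X)² − 4 det X`, one has `b ≠ 0`,
`(λ_1 − λ_2)² = b`, every `D_n = (n²/b)(det X)^{n-1}(λ_1^n − λ_2^n)²` is an
integer `d_n`, and `n ∣ m → d_n ∣ d_m`. -/
theorem stmt_12 (X : Matrix (Fin 2) (Fin 2) ℤ) (hX : IsUnit X.det)
    (lam : Fin 2 → ℂ)
    (hchar : X.charpoly.map (Int.castRingHom ℂ) =
      ∏ i : Fin 2, (Polynomial.X - Polynomial.C (lam i)))
    (hdist : lam 0 ≠ lam 1)
    (a b : ℤ) (ha : a = Matrix.trace X) (hb : b = (Matrix.trace X) ^ 2 - 4 * X.det) :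
    b ≠ 0 ∧ (lam 0 - lam 1) ^ 2 = (b : ℂ) ∧
      ∃ d : ℕ → ℤ,
        (∀ n : ℕ, 1 ≤ n → (d n : ℂ) =
          (n : ℂ) ^ 2 / (b : ℂ) * (X.det : ℂ) ^ (n - 1) *
            (lam 0 ^ n - lam 1 ^ n) ^ 2) ∧
        ∀ n m : ℕ, 1 ≤ n → 1 ≤ m → n ∣ m → d n ∣ d m := by
  set α := lam 0
  set β := lam 1
  rw [Fin.prod_univ_two] at hchar
  have hc0 : X.charpoly.coeff 0 = X.det := by
    rw [Matrix.det_eq_sign_charpoly_coeff]; simp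
  have hc1 : X.charpoly.coeff 1 = -(Matrix.trace X) := by
    have := Matrix.trace_eq_neg_charpoly_coeff X
    simp at this
    omega
  have expand : (Polynomial.X - Polynomial.C α) * (Polynomial.X - Polynomial.C β)
      = Polynomial.X ^ 2 - Polynomial.C (α + β) * Polynomial.X
        + Polynomial.C (α * β) := by rw [Polynomial.C_add, Polynomial.C_mul]; ring
  rw [expand] at hchar
  have h0 := congrArg (fun P => Polynomial.coeff P 0) hchar
  have h1 := congrArg (fun P => Polynomial.coeff P 1) hchar
  simp [Polynomial.coeff_map, hc0, hc1] at h0 h1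
  have hp : α * β = (X.det : ℂ) := h0.symm
  have hs : α + β = ((Matrix.trace X : ℤ) : ℂ) := by
    push_cast
    linear_combination h1
  have hbC : ((b : ℤ) : ℂ) = (α - β) ^ 2 := by
    rw [hb, Int.cast_sub, Int.cast_mul, Int.cast_pow, ← hs, ← hp]; push_cast; ring
  have hne : α - β ≠ 0 := sub_ne_zero.mpr hdist
  have hbne : (b : ℂ) ≠ 0 := by rw [hbC]; exact pow_ne_zero 2 hne
  refine ⟨by exact_mod_cast hbne, hbC.symm, ?_⟩
  set p := Matrix.trace X
  set q := X.det
  refine ⟨fun n => (n : ℤ) ^ 2 * q ^ (n - 1) * (lucasU p q n) ^ 2, ?_, ?_⟩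
  · intro n hn
    push_cast
    rw [lucasU_closed p q α β hs hp hdist]
    rw [div_pow, ← hbC]
    field_simp
  · intro n m hn hm hnm
    obtain ⟨k, rfl⟩ := hnm
    refine mul_dvd_mul (mul_dvd_mul ?_ ?_) ?_
    · exact pow_dvd_pow_of_dvd (Int.natCast_dvd_natCast.mpr (dvd_mul_right n k)) 2
    · exact (hX.pow (n-1)).dvd
    · exact pow_dvd_pow_of_dvd (lucasU_dvd p q α β hs hp hdist n k) 2
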